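/- Let M be a measure space with finite measure μ₀, and let (Σ_k) for k ∈ ℕ be an increasing sequence of measurable sets with Σ_0 = ∅ and union Σ. Suppose for each t < T the measure μ_t satisfies μ_t(Σ_k \ Σ_{k-1}) ≤ 2 (T - t)^(1/k) μ₀(Σ_k \ Σ_{k-1}) for all k ≥ 1. Then lim_{t → T⁻} μ_t(Σ) = 0. -/

import Mathlib

open Filter MeasureTheory

/-- If `μ₀` is finite, `S k` is an increasing sequence of measurable sets with `S 0 = ∅`,
and for all `t ∈ [0,T)` and `k ≥ 1` one has
`μ t (S k \ S (k-1)) ≤ 2 (T-t)^(1/k) μ₀ (S k \ S (k-1))`, then `μ t (⋃ k, S k) → 0`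
as `t → T⁻`. -/
theorem singular_set_vanishing_measure {X : Type*} [MeasurableSpace X]
    (T : ℝ) (hT : 0 < T) (μ₀ : Measure X) [IsFiniteMeasure μ₀]
    (μ : ℝ → Measure X) (S : ℕ → Set X)
    (hmeas : ∀ k, MeasurableSet (S k)) (h0 : S 0 = ∅) (hmono : Monotone S)
    (hineq : ∀ t ∈ Set.Ico (0 : ℝ) T, ∀ k : ℕ, 1 ≤ k →
      μ t (S k \ S (k - 1)) ≤
        ENNReal.ofReal (2 * (T - t) ^ ((1 : ℝ) / k)) * μ₀ (S k \ S (k - 1))) :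
    Tendsto (fun t => μ t (⋃ k, S k)) (nhdsWithin T (Set.Iio T)) (nhds 0) := by
  classical
  set D : ℕ → Set X := disjointed S with hD
  have hDmeas : ∀ k, MeasurableSet (D k) := MeasurableSet.disjointed hmeas
  have hD0 : D 0 = ∅ := by rw [hD, disjointed_zero, h0]
  have hDsucc : ∀ k : ℕ, D (k + 1) = S (k + 1) \ S k := fun k => hmono.disjointed_succ (not_isMax k)
  have hUnion : (⋃ k, S k) = ⋃ k, D k := iUnion_disjointed.symm
  have htsum : ∑' k, μ₀ (D k) ≠ ⊤ := by
    rw [← measure_iUnion (disjoint_disjointed S) hDmeas]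
    exact measure_ne_top _ _
  -- per-term bound for k ≥ 1 when 0 ≤ t < T
  have hbound : ∀ t, 0 ≤ t → t < T → ∀ n : ℕ,
      μ t (D (n + 1)) ≤ ENNReal.ofReal (2 * (T - t) ^ ((1 : ℝ) / (n + 1 : ℕ))) * μ₀ (D (n + 1)) := by
    intro t ht0 htT n
    have := hineq t ⟨ht0, htT⟩ (n + 1) (Nat.le_add_left 1 n)
    simpa [hDsucc n] using this
  rw [ENNReal.tendsto_nhds_zero]
  intro ε hε
  -- choose N large so that the tail of μ₀ sums is small
  have htail : Tendsto (fun n => ∑' k, μ₀ (D (k + n))) atTop (nhds 0) :=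
    ENNReal.tendsto_sum_nat_add _ htsum
  have hq : (0 : ENNReal) < ε / 2 / 2 := ENNReal.half_pos (ENNReal.half_pos hε.ne').ne'
  obtain ⟨N, hN1, hNtail⟩ : ∃ N : ℕ, 1 ≤ N ∧ ∑' k, μ₀ (D (k + N)) ≤ ε / 2 / 2 := by
    have h1 := htail.eventually (gt_mem_nhds hq)
    obtain ⟨N, hN1, hN2⟩ := (eventually_ge_atTop 1).and h1 |>.exists
    exact ⟨N, hN1, hN2.le⟩
  have hNpos : (0 : ℝ) < (1 : ℝ) / N := by
    have : (0 : ℝ) < (N : ℝ) := by exact_mod_cast hN1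
    positivity
  -- the main term tends to 0
  have hpow : Tendsto (fun t : ℝ => ENNReal.ofReal (2 * (T - t) ^ ((1 : ℝ) / N)) * μ₀ Set.univ)
      (nhdsWithin T (Set.Iio T)) (nhds 0) := by
    have h1 : Tendsto (fun t : ℝ => T - t) (nhdsWithin T (Set.Iio T)) (nhds 0) := by
      have h : Tendsto (fun t : ℝ => T - t) (nhds T) (nhds (T - T)) :=
        tendsto_const_nhds.sub tendsto_id
      rw [sub_self] at h
      exact h.mono_left nhdsWithin_le_nhds
    have h2 : ContinuousAt (fun x : ℝ => 2 * x ^ ((1 : ℝ) / N)) 0 :=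
      continuousAt_const.mul (Real.continuousAt_rpow_const 0 _ (Or.inr hNpos.le))
    have h3 : Tendsto (fun t : ℝ => 2 * (T - t) ^ ((1 : ℝ) / N))
        (nhdsWithin T (Set.Iio T)) (nhds 0) := by
      have h := h2.tendsto.comp h1
      rw [Real.zero_rpow hNpos.ne', mul_zero] at h
      exact h
    have h4 := ENNReal.tendsto_ofReal (a := 0) h3
    have h5 := ENNReal.Tendsto.mul_const h4 (Or.inr (measure_ne_top μ₀ Set.univ))
    simpa using h5
  have hmain : ∀ᶠ t in nhdsWithin T (Set.Iio T),
      ENNReal.ofReal (2 * (T - t) ^ ((1 : ℝ) / N)) * μ₀ Set.univ ≤ ε / 2 :=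
    ENNReal.tendsto_nhds_zero.mp hpow (ε / 2) (ENNReal.half_pos hε.ne')
  have hIoo : Set.Ioo (max (T - 1) 0) T ∈ nhdsWithin T (Set.Iio T) :=
    Ioo_mem_nhdsLT_of_mem ⟨max_lt (by linarith) hT, le_refl T⟩
  filter_upwards [hmain, hIoo] with t h1 h2
  obtain ⟨hlt, htT⟩ := h2
  have ht0 : 0 ≤ t := le_of_lt (lt_of_le_of_lt (le_max_right _ _) hlt)
  have hTt0 : 0 < T - t := by linarith
  have hTt1 : T - t ≤ 1 := by
    have : T - 1 < t := lt_of_le_of_lt (le_max_left _ _) hlt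
    linarith
  -- head estimate
  have hhead : ∑ k ∈ Finset.range N, μ t (D k) ≤
      ENNReal.ofReal (2 * (T - t) ^ ((1 : ℝ) / N)) * μ₀ Set.univ := by
    have hterm : ∀ k ∈ Finset.range N,
        μ t (D k) ≤ ENNReal.ofReal (2 * (T - t) ^ ((1 : ℝ) / N)) * μ₀ (D k) := by
      intro k hk
      match k with
      | 0 => simp [hD0]
      | (n + 1) =>
        refine (hbound t ht0 htT n).trans ?_
        refine mul_le_mul_left (ENNReal.ofReal_le_ofReal ?_) _
        have hkN : ((n : ℝ) + 1) ≤ (N : ℝ) := by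
          exact_mod_cast (Finset.mem_range.mp hk).le
        have hexp : (1 : ℝ) / N ≤ 1 / ((n : ℕ) + 1 : ℕ) := by
          push_cast
          apply one_div_le_one_div_of_le (by positivity) hkN
        have := Real.rpow_le_rpow_of_exponent_ge hTt0 hTt1 hexp
        push_cast at this ⊢
        nlinarith [Real.rpow_nonneg hTt0.le ((1:ℝ)/N)]
    calc ∑ k ∈ Finset.range N, μ t (D k)
        ≤ ∑ k ∈ Finset.range N, ENNReal.ofReal (2 * (T - t) ^ ((1 : ℝ) / N)) * μ₀ (D k) :=
          Finset.sum_le_sum hterm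
      _ = ENNReal.ofReal (2 * (T - t) ^ ((1 : ℝ) / N)) * ∑ k ∈ Finset.range N, μ₀ (D k) := by
          rw [Finset.mul_sum]
      _ ≤ ENNReal.ofReal (2 * (T - t) ^ ((1 : ℝ) / N)) * μ₀ Set.univ := by
          refine mul_le_mul_right ?_ _
          calc ∑ k ∈ Finset.range N, μ₀ (D k) ≤ ∑' k, μ₀ (D k) := ENNReal.sum_le_tsum _
            _ = μ₀ (⋃ k, D k) := (measure_iUnion (disjoint_disjointed S) hDmeas).symm
            _ ≤ μ₀ Set.univ := measure_mono (Set.subset_univ _)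
  -- tail estimate
  have htailest : ∑' k, μ t (D (k + N)) ≤ 2 * (ε / 2 / 2) := by
    have hterm : ∀ k : ℕ, μ t (D (k + N)) ≤ 2 * μ₀ (D (k + N)) := by
      intro k
      obtain ⟨m, hm⟩ : ∃ m, k + N = m + 1 := by
        refine ⟨k + N - 1, ?_⟩
        omega
      rw [hm]
      refine (hbound t ht0 htT m).trans (mul_le_mul_left ?_ _)
      have hle1 : (T - t) ^ ((1 : ℝ) / ((m : ℕ) + 1 : ℕ)) ≤ 1 := by
        apply Real.rpow_le_one hTt0.le hTt1
        positivity
      calc ENNReal.ofReal (2 * (T - t) ^ ((1 : ℝ) / ((m : ℕ) + 1 : ℕ)))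
          ≤ ENNReal.ofReal 2 := ENNReal.ofReal_le_ofReal (by nlinarith)
        _ = 2 := ENNReal.ofReal_ofNat 2
    calc ∑' k, μ t (D (k + N)) ≤ ∑' k, 2 * μ₀ (D (k + N)) := ENNReal.tsum_le_tsum hterm
      _ = 2 * ∑' k, μ₀ (D (k + N)) := ENNReal.tsum_mul_left
      _ ≤ 2 * (ε / 2 / 2) := mul_le_mul_right hNtail _
  -- combine
  calc μ t (⋃ k, S k) = μ t (⋃ k, D k) := by rw [hUnion]
    _ ≤ ∑' k, μ t (D k) := measure_iUnion_le _
    _ = ∑ k ∈ Finset.range N, μ t (D k) + ∑' k, μ t (D (k + N)) :=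
        (Summable.sum_add_tsum_nat_add' (f := fun k => μ t (D k)) (k := N) ENNReal.summable).symm
    _ ≤ ε / 2 + 2 * (ε / 2 / 2) := add_le_add (hhead.trans h1) htailest
    _ ≤ ε / 2 + ε / 2 := add_le_add_right ENNReal.mul_div_le _
    _ = ε := ENNReal.add_halves ε
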